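/- Under the Algorithm 1 setup, if every agent has at most F misbehaving neighbors, i.e., |𝓕 ∩ N_i| ≤ F for all i ∈ V (which holds under both the F-local and the F-total attack models), then Ω(k+1) ⊆ Ω(k) for every k ≥ 0; that is, the convex hull of the benign agents' states never expands, so every benign state remains in the convex hull Ω(0) of the benign agents' initial states. -/

import Mathlib

/-- `Psi x n` is the intersection, over all subsets `S` of the (finite) index set
with `|S| = m - n` (where `m` is the cardinality of the index set), of the convex
hull of the points indexed by `S`. -/
def Psi {d : ℕ} {ι : Type*} [Fintype ι] (x : ι → (Fin d → ℝ)) (n : ℕ) :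
    Set (Fin d → ℝ) :=
  ⋂ S ∈ {S : Finset ι | S.card = Fintype.card ι - n},
    convexHull ℝ (x '' (S : Set ι))

/-- The setup of Algorithm 1: `G` is the (undirected) communication graph on the
finite vertex set `V` in which every vertex has at least `(d+1)F + 1` neighbors,
`Fset` is the set of misbehaving agents, `x k i` is the state of agent `i` at time
`k`, and `msg k j i` is the value agent `j` sends to agent `i` at time `k` (equal
to `x k j` whenever `j` is benign).  Every benign agent `i` updates at time `k` by
sorting on coordinate `p = (k % d) + 1` (0-indexed: `k % d`): it chooses sets
`Y`, `Z` of `(d+1)F + 1` neighbors whose received values are smallest (resp.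
largest) in that coordinate, picks middle points `y ∈ Ψ(Y-values, F)` and
`z ∈ Ψ(Z-values, F)`, and sets `x (k+1) i = (x k i + y + z) / 3`. -/
structure Algo1 {V : Type*} [Fintype V] [DecidableEq V]
    (d F : ℕ) (hd : 0 < d) (G : SimpleGraph V) [DecidableRel G.Adj]
    (Fset : Finset V) (x : ℕ → V → (Fin d → ℝ))
    (msg : ℕ → V → V → (Fin d → ℝ)) : Prop where
  degree : ∀ i : V, (d + 1) * F + 1 ≤ (G.neighborFinset i).card
  benign_msg : ∀ (k : ℕ) (j i : V), j ∉ Fset → msg k j i = x k j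
  update : ∀ (k : ℕ) (i : V), i ∉ Fset →
    ∃ (Y Z : Finset V) (yv zv : Fin d → ℝ),
      Y ⊆ G.neighborFinset i ∧ Z ⊆ G.neighborFinset i ∧
      Y.card = (d + 1) * F + 1 ∧ Z.card = (d + 1) * F + 1 ∧
      (∀ a ∈ Y, ∀ b ∈ G.neighborFinset i, b ∉ Y →
        msg k a i ⟨k % d, Nat.mod_lt k hd⟩ ≤ msg k b i ⟨k % d, Nat.mod_lt k hd⟩) ∧
      (∀ a ∈ Z, ∀ b ∈ G.neighborFinset i, b ∉ Z →
        msg k b i ⟨k % d, Nat.mod_lt k hd⟩ ≤ msg k a i ⟨k % d, Nat.mod_lt k hd⟩) ∧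
      yv ∈ Psi (fun j : Y => msg k j i) F ∧
      zv ∈ Psi (fun j : Z => msg k j i) F ∧
      x (k + 1) i = ((1 : ℝ) / 3) • (x k i + yv + zv)

/-- If at most `F` of the indices in `Y` are bad, any point of `Psi` over `Y`'s
values lies in the convex hull of the good values. -/
lemma psi_mem_hull_good {d F : ℕ} {V : Type*} [DecidableEq V]
    (Fset Y : Finset V) (hYF : (Y ∩ Fset).card ≤ F)
    (hYcard : F + 1 ≤ Y.card)
    (f : V → Fin d → ℝ) {yv : Fin d → ℝ}
    (hy : yv ∈ Psi (fun j : Y => f j) F) :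
    yv ∈ convexHull ℝ (f '' ((Y \ Fset : Finset V) : Set V)) := by
  have hsd : (Y \ Fset).card + (Y ∩ Fset).card = Y.card :=
    Finset.card_sdiff_add_card_inter Y Fset
  have hle : Y.card - F ≤ (Y \ Fset).card := by omega
  obtain ⟨S', hS'sub, hS'card⟩ := Finset.exists_subset_card_eq hle
  set S : Finset ↥Y := Y.attach.filter (fun j => (j : V) ∈ S') with hS
  have himg : S.image (fun j : ↥Y => (j : V)) = S' := by
    ext v
    simp only [hS, Finset.mem_image, Finset.mem_filter, Finset.mem_attach, true_and]
    constructor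
    · rintro ⟨a, ha, rfl⟩; exact ha
    · intro hv
      have hvY : v ∈ Y := (Finset.mem_sdiff.mp (hS'sub hv)).1
      exact ⟨⟨v, hvY⟩, hv, rfl⟩
  have hScard : S.card = Fintype.card ↥Y - F := by
    rw [Fintype.card_coe]
    have h1 : S.card = S'.card := by
      rw [← himg, Finset.card_image_of_injective _ Subtype.coe_injective]
    omega
  simp only [Psi, Set.mem_iInter, Set.mem_setOf_eq] at hy
  refine convexHull_mono ?_ (hy S hScard)
  rintro _ ⟨j, hj, rfl⟩
  have hjS' : (j : V) ∈ S' := by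
    have : j ∈ S := hj
    simpa [hS] using this
  exact ⟨(j : V), hS'sub hjS', rfl⟩

theorem stmt8 {V : Type*} [Fintype V] [DecidableEq V]
    (d F : ℕ) (hd : 0 < d) (G : SimpleGraph V) [DecidableRel G.Adj]
    (Fset : Finset V) (x : ℕ → V → (Fin d → ℝ))
    (msg : ℕ → V → V → (Fin d → ℝ))
    (halg : Algo1 d F hd G Fset x msg)
    (hlocal : ∀ i : V, (Fset ∩ G.neighborFinset i).card ≤ F) :
    (∀ k : ℕ,
      convexHull ℝ ((fun i : V => x (k + 1) i) '' (Fsetᶜ : Finset V)) ⊆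
        convexHull ℝ ((fun i : V => x k i) '' (Fsetᶜ : Finset V))) ∧
    (∀ (k : ℕ) (i : V), i ∉ Fset →
      x k i ∈ convexHull ℝ ((fun i : V => x 0 i) '' (Fsetᶜ : Finset V))) := by
  classical
  set Om : ℕ → Set (Fin d → ℝ) :=
    fun k => convexHull ℝ ((fun i : V => x k i) '' (Fsetᶜ : Finset V)) with hOm
  have key : ∀ (k : ℕ) (i : V), i ∉ Fset → x (k + 1) i ∈ Om k := by
    intro k i hi
    obtain ⟨Y, Z, yv, zv, hYsub, hZsub, hYc, hZc, -, -, hy, hz, hupd⟩ :=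
      halg.update k i hi
    have hcard : ∀ W : Finset V, W ⊆ G.neighborFinset i → (W ∩ Fset).card ≤ F := by
      intro W hW
      refine le_trans (Finset.card_le_card ?_) (hlocal i)
      intro v hv
      rw [Finset.mem_inter] at hv ⊢
      exact ⟨hv.2, hW hv.1⟩
    have hFle : F + 1 ≤ (d + 1) * F + 1 := by
      have : F ≤ (d + 1) * F := Nat.le_mul_of_pos_left F (by omega)
      omega
    have hmem : ∀ (W : Finset V) (w : Fin d → ℝ), W ⊆ G.neighborFinset i →
        W.card = (d + 1) * F + 1 → w ∈ Psi (fun j : W => msg k j i) F → w ∈ Om k := by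
      intro W w hWsub hWc hw
      have h1 := psi_mem_hull_good Fset W (hcard W hWsub) (by omega)
        (fun j => msg k j i) hw
      refine convexHull_mono ?_ h1
      rintro _ ⟨v, hv, rfl⟩
      have hv' : v ∈ Y ∪ Z ∨ True := Or.inr trivial
      have hvm : v ∈ W \ Fset := hv
      rw [Finset.mem_sdiff] at hvm
      refine ⟨v, ?_, (halg.benign_msg k v i hvm.2).symm⟩
      simp [hvm.2]
    have hyΩ : yv ∈ Om k := hmem Y yv hYsub hYc hy
    have hzΩ : zv ∈ Om k := hmem Z zv hZsub hZc hz
    have hxΩ : x k i ∈ Om k := subset_convexHull ℝ _ ⟨i, by simp [hi], rfl⟩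
    have hconv : Convex ℝ (Om k) := convex_convexHull ℝ _
    have h1 : ((1 : ℝ) / 2) • x k i + ((1 : ℝ) / 2) • yv ∈ Om k :=
      hconv hxΩ hyΩ (by norm_num) (by norm_num) (by norm_num)
    have h2 : ((2 : ℝ) / 3) • (((1 : ℝ) / 2) • x k i + ((1 : ℝ) / 2) • yv)
        + ((1 : ℝ) / 3) • zv ∈ Om k :=
      hconv h1 hzΩ (by norm_num) (by norm_num) (by norm_num)
    rw [hupd]
    convert h2 using 1
    module
  have hsub : ∀ k : ℕ, Om (k + 1) ⊆ Om k := by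
    intro k
    refine convexHull_min ?_ (convex_convexHull ℝ _)
    rintro _ ⟨i, hi, rfl⟩
    exact key k i (by simpa using hi)
  have h0 : ∀ k : ℕ, Om k ⊆ Om 0 := by
    intro k
    induction k with
    | zero => exact subset_rfl
    | succ n ih => exact (hsub n).trans ih
  refine ⟨hsub, ?_⟩
  intro k i hi
  exact h0 k (subset_convexHull ℝ _ ⟨i, by simp [hi], rfl⟩)
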